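/- arXiv:1707.09628 — 2 statements merged into one kernel-verified Lean document; each statement's English description precedes it below -/
import Mathlib

section
/- Let ρ = (ρ_t)_{t∈[0,1]} be a Bessel bridge of dimension δ = 4/3 from 0 to 0. Then ∫_0^1 E[ρ_t^{-2/3}] dt < ∞. -/
open MeasureTheory Real Set

lemma stmt9_inner {C : ℝ} (hC : 0 ≤ C) {t : ℝ} (ht : t ∈ Set.Ioo (0 : ℝ) 1) :
    ∫⁻ x in Set.Ioi (0 : ℝ), ENNReal.ofReal (x ^ (-(2 : ℝ) / 3) *
        (C * x ^ ((4 : ℝ) / 3 - 1) * (t * (1 - t)) ^ (-(2 : ℝ) / 3) *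
          Real.exp (-(x ^ 2) / (2 * (t * (1 - t))))))
      = ENNReal.ofReal ((C * (1 / 2) * (2 : ℝ) ^ ((1 : ℝ) / 3) * Real.Gamma (1 / 3)) *
          (t * (1 - t)) ^ (-(1 : ℝ) / 3)) := by
  set s := t * (1 - t) with hs_def
  have hs : 0 < s := mul_pos ht.1 (by linarith [ht.2])
  have hb : 0 < (2 * s)⁻¹ := by positivity
  have hcong : ∀ x ∈ Set.Ioi (0 : ℝ),
      x ^ (-(2 : ℝ) / 3) * (C * x ^ ((4 : ℝ) / 3 - 1) * s ^ (-(2 : ℝ) / 3) *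
        Real.exp (-(x ^ 2) / (2 * s)))
      = (C * s ^ (-(2 : ℝ) / 3)) *
          (x ^ (-(1 : ℝ) / 3) * Real.exp (-(2 * s)⁻¹ * x ^ 2)) := by
    intro x hx
    have hx0 : (0 : ℝ) < x := hx
    have h1 : x ^ (-(2 : ℝ) / 3) * x ^ ((4 : ℝ) / 3 - 1) = x ^ (-(1 : ℝ) / 3) := by
      rw [← Real.rpow_add hx0]; norm_num
    have h2 : -(x ^ 2) / (2 * s) = -(2 * s)⁻¹ * x ^ 2 := by
      field_simp
    rw [h2, ← h1]; ring
  rw [setLIntegral_congr_fun measurableSet_Ioi (fun x hx => congrArg ENNReal.ofReal (hcong x hx))]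
  have hint : IntegrableOn
      (fun x : ℝ => (C * s ^ (-(2 : ℝ) / 3)) *
        (x ^ (-(1 : ℝ) / 3) * Real.exp (-(2 * s)⁻¹ * x ^ 2))) (Set.Ioi 0) :=
    (integrableOn_rpow_mul_exp_neg_mul_sq hb (by norm_num)).const_mul _
  rw [← MeasureTheory.ofReal_integral_eq_lintegral_ofReal hint ?_]
  · congr 1
    rw [MeasureTheory.integral_const_mul]
    have hval := integral_rpow_mul_exp_neg_mul_rpow (p := 2) (q := -(1 : ℝ) / 3)
      (b := (2 * s)⁻¹) two_pos (by norm_num) hb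
    have h2' : ∫ x in Set.Ioi (0 : ℝ), x ^ (-(1 : ℝ) / 3) * Real.exp (-(2 * s)⁻¹ * x ^ 2)
        = ((2 * s)⁻¹) ^ (-(-(1 : ℝ) / 3 + 1) / 2) * (1 / 2) *
            Real.Gamma ((-(1 : ℝ) / 3 + 1) / 2) := by
      rw [← hval]
      refine setIntegral_congr_fun measurableSet_Ioi (fun x hx => ?_)
      rw [Real.rpow_two]
    rw [h2']
    have e1 : (-(-(1 : ℝ) / 3 + 1) / 2) = -(1 : ℝ) / 3 := by norm_num
    have e2 : ((-(1 : ℝ) / 3 + 1) / 2) = (1 : ℝ) / 3 := by norm_num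
    rw [e1, e2]
    have e3 : ((2 * s)⁻¹) ^ (-(1 : ℝ) / 3) = (2 : ℝ) ^ ((1 : ℝ) / 3) * s ^ ((1 : ℝ) / 3) := by
      rw [← Real.rpow_neg_one, ← Real.rpow_mul (by positivity : (0:ℝ) ≤ 2 * s),
        show (-1 : ℝ) * (-1 / 3) = 1 / 3 by norm_num, Real.mul_rpow (by norm_num) hs.le]
    have e4 : s ^ (-(2 : ℝ) / 3) * s ^ ((1 : ℝ) / 3) = s ^ (-(1 : ℝ) / 3) := by
      rw [← Real.rpow_add hs]; norm_num
    rw [e3]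
    calc C * s ^ (-(2 : ℝ) / 3) * ((2 : ℝ) ^ ((1 : ℝ) / 3) * s ^ ((1 : ℝ) / 3) * (1 / 2)
          * Real.Gamma (1 / 3))
        = C * (1 / 2) * (2 : ℝ) ^ ((1 : ℝ) / 3) * Real.Gamma (1 / 3) *
            (s ^ (-(2 : ℝ) / 3) * s ^ ((1 : ℝ) / 3)) := by ring
      _ = _ := by rw [e4]
  · filter_upwards [ae_restrict_mem measurableSet_Ioi] with x hx
    have hx0 : (0 : ℝ) < x := hx
    exact mul_nonneg (mul_nonneg hC (Real.rpow_nonneg hs.le _))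
      (mul_nonneg (Real.rpow_nonneg hx0.le _) (Real.exp_pos _).le)

/-- For a Bessel bridge `ρ` of dimension `δ = 4/3` from `0` to `0` on `[0,1]` (encoded via
the explicit density `C x^{δ-1} (t(1-t))^{-δ/2} exp(-x²/(2t(1-t)))` of `ρ_t` for
`t ∈ (0,1)`), one has `∫_0^1 E[ρ_t^{-2/3}] dt < ∞`. -/
theorem stmt9 {Ω : Type*} [MeasurableSpace Ω] (μ : Measure Ω) [IsProbabilityMeasure μ]
    (ρ : ℝ → Ω → ℝ) (C : ℝ) (hC : 0 < C)
    (hdens : ∀ t ∈ Set.Ioo (0 : ℝ) 1,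
      ∫⁻ ω, ENNReal.ofReal ((ρ t ω) ^ (-(2 : ℝ) / 3)) ∂μ
        = ∫⁻ x in Set.Ioi (0 : ℝ), ENNReal.ofReal (x ^ (-(2 : ℝ) / 3) *
            (C * x ^ ((4 : ℝ) / 3 - 1) * (t * (1 - t)) ^ (-(2 : ℝ) / 3) *
              Real.exp (-(x ^ 2) / (2 * (t * (1 - t)))))) ) :
    ∫⁻ t in Set.Ioo (0 : ℝ) 1, (∫⁻ ω, ENNReal.ofReal ((ρ t ω) ^ (-(2 : ℝ) / 3)) ∂μ) < ⊤ := by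
  set K : ℝ := C * (1 / 2) * (2 : ℝ) ^ ((1 : ℝ) / 3) * Real.Gamma (1 / 3) with hK
  have hK0 : 0 ≤ K := by
    have := Real.Gamma_pos_of_pos (show (0:ℝ) < 1/3 by norm_num)
    positivity
  have h1 : ∫⁻ t in Set.Ioo (0 : ℝ) 1,
      (∫⁻ ω, ENNReal.ofReal ((ρ t ω) ^ (-(2 : ℝ) / 3)) ∂μ)
      = ∫⁻ t in Set.Ioo (0 : ℝ) 1, ENNReal.ofReal (K * (t * (1 - t)) ^ (-(1 : ℝ) / 3)) := by
    refine setLIntegral_congr_fun measurableSet_Ioo (fun t ht => ?_)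
    rw [hdens t ht, stmt9_inner hC.le ht]
  rw [h1]
  have hbd : ∀ t ∈ Set.Ioo (0 : ℝ) 1,
      ENNReal.ofReal (K * (t * (1 - t)) ^ (-(1 : ℝ) / 3))
        ≤ ENNReal.ofReal (K * (t ^ (-(2 : ℝ) / 3) + (1 - t) ^ (-(2 : ℝ) / 3))) := by
    intro t ht
    refine ENNReal.ofReal_le_ofReal ?_
    have ht0 : 0 < t := ht.1
    have ht1 : 0 < 1 - t := by linarith [ht.2]
    have hmul : (t * (1 - t)) ^ (-(1 : ℝ) / 3)
        = t ^ (-(1 : ℝ) / 3) * (1 - t) ^ (-(1 : ℝ) / 3) :=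
      Real.mul_rpow ht0.le ht1.le
    set a := t ^ (-(1 : ℝ) / 3)
    set b := (1 - t) ^ (-(1 : ℝ) / 3)
    have ha : 0 ≤ a := Real.rpow_nonneg ht0.le _
    have hb : 0 ≤ b := Real.rpow_nonneg ht1.le _
    have hab : a * b ≤ a ^ 2 + b ^ 2 := by
      nlinarith [two_mul_le_add_sq a b, mul_nonneg ha hb]
    have ha2 : a ^ 2 = t ^ (-(2 : ℝ) / 3) := by
      rw [← Real.rpow_natCast (t ^ (-(1 : ℝ) / 3)) 2, ← Real.rpow_mul ht0.le]
      norm_num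
    have hb2 : b ^ 2 = (1 - t) ^ (-(2 : ℝ) / 3) := by
      rw [← Real.rpow_natCast ((1 - t) ^ (-(1 : ℝ) / 3)) 2, ← Real.rpow_mul ht1.le]
      norm_num
    rw [hmul]
    have : a * b ≤ t ^ (-(2 : ℝ) / 3) + (1 - t) ^ (-(2 : ℝ) / 3) := by
      rw [← ha2, ← hb2]; exact hab
    exact mul_le_mul_of_nonneg_left this hK0
  calc ∫⁻ t in Set.Ioo (0 : ℝ) 1, ENNReal.ofReal (K * (t * (1 - t)) ^ (-(1 : ℝ) / 3))
      ≤ ∫⁻ t in Set.Ioo (0 : ℝ) 1,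
          ENNReal.ofReal (K * (t ^ (-(2 : ℝ) / 3) + (1 - t) ^ (-(2 : ℝ) / 3))) := by
        refine setLIntegral_mono_ae ?_ ?_
        · apply Measurable.aemeasurable
          fun_prop
        · exact Filter.Eventually.of_forall hbd
    _ < ⊤ := by
        have hi1 : IntervalIntegrable (fun x : ℝ => x ^ (-(2 : ℝ) / 3)) volume 0 1 :=
          intervalIntegral.intervalIntegrable_rpow' (by norm_num)
        have hi2 : IntervalIntegrable (fun x : ℝ => (1 - x) ^ (-(2 : ℝ) / 3)) volume 0 1 := by
          simpa using (hi1.comp_sub_left 1).symm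
        have hi : IntegrableOn
            (fun t : ℝ => K * (t ^ (-(2 : ℝ) / 3) + (1 - t) ^ (-(2 : ℝ) / 3)))
            (Set.Ioo (0 : ℝ) 1) := by
          have := ((hi1.add hi2).const_mul K)
          rw [intervalIntegrable_iff_integrableOn_Ioc_of_le (by norm_num : (0:ℝ) ≤ 1)] at this
          exact this.mono_set Set.Ioo_subset_Ioc_self
        exact hi.lintegral_lt_top
end

section
/- Let s ∈ ℕ and let real numbers u_1,...,u_s be given. Define F = max_{j≤s} |Σ_{i=1}^j (-1)^{i-1} u_i|, F₁ = max_{j ≤ ⌊s/2⌋+1} |Σ_{i=1}^j (-1)^{i-1} u_i| and F̃₁ = max_{j ≤ ⌊s/2⌋+1} |Σ_{i=1}^{j-1} (-1)^{i-1}(-u_{s+1-i})|. Then F ≤ 3·max(F₁, F̃₁). -/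
open Finset

lemma key19 (s : ℕ) (u : ℕ → ℝ) : ∀ k ≤ s,
    (∑ i ∈ range s, (-1:ℝ)^i * u i) - ∑ i ∈ range (s - k), (-1:ℝ)^i * u i
      = (-1:ℝ)^s * ∑ i ∈ range k, (-1:ℝ)^i * (-(u (s - 1 - i))) := by
  intro k
  induction k with
  | zero => intro _; simp
  | succ k ih =>
    intro hk
    have hk' : k ≤ s := Nat.le_of_succ_le hk
    have ih' := ih hk'
    have h1 : s - k = (s - (k+1)) + 1 := by omega
    have hidx : s - 1 - k = s - (k+1) := by omega
    have e1 : (∑ i ∈ range (s-k), (-1:ℝ)^i * u i)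
        = (∑ i ∈ range (s-(k+1)), (-1:ℝ)^i * u i)
          + (-1:ℝ)^(s-(k+1)) * u (s-(k+1)) := by
      rw [h1, sum_range_succ]
    have hsgn : ((-1:ℝ))^(s-(k+1)) = (-1:ℝ)^s * (-1:ℝ)^(k+1) := by
      have hs : s = (s - (k+1)) + (k+1) := by omega
      conv_rhs => rw [hs]
      rw [pow_add, mul_assoc, ← pow_add]
      have h2 : (k+1) + (k+1) = 2 * (k+1) := by ring
      rw [h2, pow_mul]
      norm_num
    rw [e1, hsgn, pow_succ] at ih'
    rw [sum_range_succ, hidx]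
    linear_combination ih'

/-- Inequality (5.82): with `S_j = ∑_{i=1}^j (-1)^{i-1} u_i`,
`F = max_{j ≤ s} |S_j|`, `F₁ = max_{j ≤ ⌊s/2⌋+1} |S_j|` and
`F̃₁ = max_{j ≤ ⌊s/2⌋+1} |∑_{i=1}^{j-1} (-1)^{i-1}(-u_{s+1-i})|`, one has
`F ≤ 3 max (F₁, F̃₁)`.  (Increments are indexed `u 0, …, u (s-1)` here.) -/
theorem stmt19 (s : ℕ) (u : ℕ → ℝ) :
    (Finset.range (s + 1)).sup' Finset.nonempty_range_add_one
        (fun j => |∑ i ∈ Finset.range j, (-1 : ℝ) ^ i * u i|)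
      ≤ 3 * max
        ((Finset.range (s / 2 + 2)).sup' Finset.nonempty_range_add_one
          (fun j => |∑ i ∈ Finset.range j, (-1 : ℝ) ^ i * u i|))
        ((Finset.range (s / 2 + 2)).sup' Finset.nonempty_range_add_one
          (fun j => |∑ i ∈ Finset.range (j - 1), (-1 : ℝ) ^ i * (-(u (s - 1 - i)))|)) := by
  set S : ℕ → ℝ := fun j => ∑ i ∈ Finset.range j, (-1 : ℝ) ^ i * u i with hS
  set F1 := (Finset.range (s / 2 + 2)).sup' Finset.nonempty_range_add_one
      (fun j => |∑ i ∈ Finset.range j, (-1 : ℝ) ^ i * u i|) with hF1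
  set Ft := (Finset.range (s / 2 + 2)).sup' Finset.nonempty_range_add_one
      (fun j => |∑ i ∈ Finset.range (j - 1), (-1 : ℝ) ^ i * (-(u (s - 1 - i)))|) with hFt
  have hF1le : ∀ j, j ≤ s/2 + 1 → |S j| ≤ F1 := by
    intro j hj
    have hm : j ∈ Finset.range (s/2 + 2) := Finset.mem_range.mpr (by omega)
    exact Finset.le_sup' (fun j => |∑ i ∈ Finset.range j, (-1 : ℝ) ^ i * u i|) hm
  have hFtle : ∀ k, k ≤ s/2 → |S s - S (s - k)| ≤ Ft := by
    intro k hk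
    have hkey := key19 s u k (by omega)
    have hm : k + 1 ∈ Finset.range (s/2 + 2) := Finset.mem_range.mpr (by omega)
    have hle := Finset.le_sup'
      (fun j => |∑ i ∈ Finset.range (j - 1), (-1 : ℝ) ^ i * (-(u (s - 1 - i)))|) hm
    simp only [Nat.add_sub_cancel] at hle
    calc |S s - S (s - k)|
        = |(-1:ℝ)^s * ∑ i ∈ Finset.range k, (-1:ℝ)^i * (-(u (s - 1 - i)))| := by
          rw [hS]; rw [hkey]
      _ = |∑ i ∈ Finset.range k, (-1:ℝ)^i * (-(u (s - 1 - i)))| := by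
          rw [abs_mul, abs_pow, abs_neg, abs_one, one_pow, one_mul]
      _ ≤ Ft := hle
  have h0 : (0:ℝ) ≤ F1 := by
    have := hF1le 0 (by omega)
    simp [hS] at this
    calc (0:ℝ) ≤ |S 0| := abs_nonneg _
      _ ≤ F1 := hF1le 0 (by omega)
  have hmax1 : F1 ≤ max F1 Ft := le_max_left _ _
  have hmax2 : Ft ≤ max F1 Ft := le_max_right _ _
  have hSs : |S s| ≤ F1 + Ft := by
    have h1 := hF1le (s - s/2) (by omega)
    have h2 := hFtle (s/2) le_rfl
    have h3 : S s = S (s - s/2) + (S s - S (s - s/2)) := by ring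
    calc |S s| = |S (s - s/2) + (S s - S (s - s/2))| := by rw [← h3]
      _ ≤ |S (s - s/2)| + |S s - S (s - s/2)| := abs_add_le _ _
      _ ≤ F1 + Ft := add_le_add h1 h2
  apply Finset.sup'_le
  intro j hj
  rw [Finset.mem_range] at hj
  have hj' : j ≤ s := by omega
  by_cases hc : j ≤ s/2 + 1
  · have := hF1le j hc
    have h0' : (0:ℝ) ≤ max F1 Ft := le_trans h0 hmax1
    calc |S j| ≤ F1 := this
      _ ≤ max F1 Ft := hmax1
      _ ≤ 3 * max F1 Ft := by linarith
  · have hk : s - j ≤ s/2 := by omega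
    have h2 := hFtle (s - j) hk
    have hjj : s - (s - j) = j := by omega
    rw [hjj] at h2
    have h3 : |S j| - |S s| ≤ |S j - S s| := abs_sub_abs_le_abs_sub _ _
    rw [abs_sub_comm] at h3
    have : |S j| ≤ F1 + 2 * Ft := by linarith
    calc |S j| ≤ F1 + 2 * Ft := this
      _ ≤ 3 * max F1 Ft := by
        have h0t : (0:ℝ) ≤ Ft := le_trans (abs_nonneg _) (hFtle 0 (by omega))
        linarith
end
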